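/- Let B be an R-bilinear antisymmetric biderivation of D with values in I(P,R). Then there exists a map σ, assigning to each pair x < y in P an element σ(x,y) ∈ R and constant on chains, such that for all f, g ∈ D: B(f,g)(x,x) = 0 for all x ∈ P, and B(f,g)(x,y) = σ(x,y)·[f,g](x,y) for all x < y in P. -/

import Mathlib

/-- The element `e_{xy}` of the incidence algebra: value `1` at `(x, y)` and `0` elsewhere. -/
def esingle (R : Type*) {P : Type*} [CommRing R] [PartialOrder P] [DecidableEq P]
    {x y : P} (_h : x ≤ y) : IncidenceAlgebra R P :=
  ⟨fun u v => if u = x ∧ v = y then 1 else 0, fun u v huv => by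
    try dsimp only
    split_ifs with h'
    · obtain ⟨rfl, rfl⟩ := h'
      exact absurd _h huv
    · rfl⟩

/-- `D`: the `R`-span of the elements `e_{xy}`, `x ≤ y`, i.e. the finitely supported elements of
the incidence algebra. -/
def Dspan (R P : Type*) [CommRing R] [PartialOrder P] [DecidableEq P] :
    Submodule R (IncidenceAlgebra R P) :=
  Submodule.span R {f : IncidenceAlgebra R P | ∃ (x y : P) (h : x ≤ y), f = esingle R h}

set_option linter.unusedSectionVars false

namespace StTen

open IncidenceAlgebra Finset

variable {R P : Type*} [CommRing R] [PartialOrder P] [LocallyFiniteOrder P] [DecidableEq P]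

lemma esingle_apply {x y : P} (h : x ≤ y) (a b : P) :
    esingle R h a b = if a = x ∧ b = y then 1 else 0 := rfl

lemma esingle_mem {x y : P} (h : x ≤ y) : esingle R h ∈ Dspan R P :=
  Submodule.subset_span ⟨x, y, h, rfl⟩

lemma esingle_mul_apply {x y : P} (h : x ≤ y) (f : IncidenceAlgebra R P) (a b : P) :
    (esingle R h * f) a b = if a = x then f y b else 0 := by
  rw [mul_apply]
  by_cases hax : a = x
  · subst hax
    rw [if_pos rfl]
    have hc : ∀ z ∈ Finset.Icc a b, esingle R h a z * f z b = if z = y then f z b else 0 := by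
      intro z _; rw [esingle_apply]; by_cases hzy : z = y <;> simp [hzy]
    rw [Finset.sum_congr rfl hc, Finset.sum_ite_eq' (Finset.Icc a b) y (fun z => f z b)]
    by_cases hy : y ∈ Finset.Icc a b
    · rw [if_pos hy]
    · rw [if_neg hy]
      have hyb : ¬ y ≤ b := fun hyb => hy (Finset.mem_Icc.mpr ⟨h, hyb⟩)
      exact (apply_eq_zero_of_not_le hyb f).symm
  · rw [if_neg hax]
    refine Finset.sum_eq_zero fun z _ => ?_
    rw [esingle_apply, if_neg (by tauto), zero_mul]

lemma mul_esingle_apply {x y : P} (h : x ≤ y) (f : IncidenceAlgebra R P) (a b : P) :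
    (f * esingle R h) a b = if b = y then f a x else 0 := by
  rw [mul_apply]
  by_cases hby : b = y
  · subst hby
    rw [if_pos rfl]
    have hc : ∀ z ∈ Finset.Icc a b, f a z * esingle R h z b = if z = x then f a z else 0 := by
      intro z _; rw [esingle_apply]; by_cases hzx : z = x <;> simp [hzx]
    rw [Finset.sum_congr rfl hc, Finset.sum_ite_eq' (Finset.Icc a b) x (fun z => f a z)]
    by_cases hx : x ∈ Finset.Icc a b
    · rw [if_pos hx]
    · rw [if_neg hx]
      have hax : ¬ a ≤ x := fun hax => hx (Finset.mem_Icc.mpr ⟨hax, h⟩)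
      exact (apply_eq_zero_of_not_le hax f).symm
  · rw [if_neg hby]
    refine Finset.sum_eq_zero fun z _ => ?_
    rw [esingle_apply, if_neg (by tauto), mul_zero]

/-- `e(x,y) * e(y,v) = e(x,v)`. -/
lemma esingle_mul_esingle {x y v : P} (h : x ≤ y) (h' : y ≤ v) :
    esingle R h * esingle R h' = esingle R (h.trans h') := by
  ext a b _
  rw [esingle_mul_apply, esingle_apply, esingle_apply]
  by_cases hax : a = x <;> simp [hax]

lemma esingle_mul_esingle_ne {x y u v : P} (h : x ≤ y) (h' : u ≤ v) (hyu : y ≠ u) :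
    esingle R h * esingle R h' = 0 := by
  ext a b _
  rw [esingle_mul_apply, esingle_apply, IncidenceAlgebra.zero_apply]
  by_cases hax : a = x <;> simp [hax, hyu]

abbrev diag (R : Type*) {P : Type*} [CommRing R] [PartialOrder P] [DecidableEq P] (x : P) :
    IncidenceAlgebra R P := esingle R (le_refl x)

lemma diag_mul_apply (x : P) (f : IncidenceAlgebra R P) (a b : P) :
    (diag R x * f) a b = if a = x then f x b else 0 := esingle_mul_apply _ f a b

lemma mul_diag_apply (y : P) (f : IncidenceAlgebra R P) (a b : P) :
    (f * diag R y) a b = if b = y then f a y else 0 := mul_esingle_apply _ f a b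

lemma diag_mul_esingle {x y : P} (h : x ≤ y) : diag R x * esingle R h = esingle R h :=
  esingle_mul_esingle (le_refl x) h

lemma esingle_mul_diag {x y : P} (h : x ≤ y) : esingle R h * diag R y = esingle R h :=
  esingle_mul_esingle h (le_refl y)

lemma diag_mul_diag (x : P) : diag R x * diag R x = diag R x :=
  esingle_mul_esingle (le_refl x) (le_refl x)

lemma diag_mul_diag_ne {x u : P} (h : x ≠ u) : diag R x * diag R u = 0 :=
  esingle_mul_esingle_ne _ _ h

lemma esingle_self_apply {x y : P} (h : x ≤ y) : esingle R h x y = 1 := by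
  rw [esingle_apply, if_pos ⟨rfl, rfl⟩]


/-- Bundled antisymmetric biderivation of `D` with values in `I(P,R)`. -/
structure Bider (R P : Type*) [CommRing R] [PartialOrder P] [LocallyFiniteOrder P]
    [DecidableEq P] where
  B : IncidenceAlgebra R P → IncidenceAlgebra R P → IncidenceAlgebra R P
  hadd_l : ∀ f g h, f ∈ Dspan R P → g ∈ Dspan R P → h ∈ Dspan R P →
      B (f + g) h = B f h + B g h
  hadd_r : ∀ f g h, f ∈ Dspan R P → g ∈ Dspan R P → h ∈ Dspan R P →
      B f (g + h) = B f g + B f h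
  hsmul_l : ∀ (r : R) (f h), f ∈ Dspan R P → h ∈ Dspan R P → B (r • f) h = r • B f h
  hsmul_r : ∀ (r : R) (f h), f ∈ Dspan R P → h ∈ Dspan R P → B f (r • h) = r • B f h
  hder_l : ∀ f g h, f ∈ Dspan R P → g ∈ Dspan R P → h ∈ Dspan R P →
      B (f * g) h = B f h * g + f * B g h
  hder_r : ∀ f g h, f ∈ Dspan R P → g ∈ Dspan R P → h ∈ Dspan R P →
      B f (g * h) = B f g * h + g * B f h
  hanti : ∀ f, f ∈ Dspan R P → B f f = 0

namespace Bider

variable {R P : Type*} [CommRing R] [PartialOrder P] [LocallyFiniteOrder P] [DecidableEq P]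
variable (β : Bider R P)

lemma zero_l {g : IncidenceAlgebra R P} (hg : g ∈ Dspan R P) : β.B 0 g = 0 := by
  have h := β.hsmul_l 0 0 g (Submodule.zero_mem _) hg
  rw [zero_smul, zero_smul] at h
  exact h

lemma zero_r {f : IncidenceAlgebra R P} (hf : f ∈ Dspan R P) : β.B f 0 = 0 := by
  have h := β.hsmul_r 0 f 0 hf (Submodule.zero_mem _)
  rw [zero_smul, zero_smul] at h
  exact h

lemma skew {f g : IncidenceAlgebra R P} (hf : f ∈ Dspan R P) (hg : g ∈ Dspan R P) :
    β.B f g = -β.B g f := by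
  have hfg : f + g ∈ Dspan R P := Submodule.add_mem _ hf hg
  have h1 := β.hanti (f + g) hfg
  rw [β.hadd_l f g (f + g) hf hg hfg, β.hadd_r f f g hf hf hg, β.hadd_r g f g hg hf hg,
    β.hanti f hf, β.hanti g hg, zero_add, add_zero] at h1
  exact eq_neg_of_add_eq_zero_left h1


open StTen

lemma apply_congr {F G : IncidenceAlgebra R P} (h : F = G) (a b : P) : F a b = G a b := by
  rw [h]

lemma diag_diag (x u : P) : β.B (diag R x) (diag R u) = 0 := by
  rcases eq_or_ne x u with rfl | hne
  · exact β.hanti _ (esingle_mem _)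
  · have memx := esingle_mem (R := R) (le_refl x)
    have memu := esingle_mem (R := R) (le_refl u)
    have col : β.B (diag R x) (diag R u) * diag R x = 0 := by
      have hd := β.hder_r (diag R x) (diag R u) (diag R x) memx memu memx
      rw [diag_mul_diag_ne (Ne.symm hne), β.zero_r memx, β.hanti _ memx, mul_zero,
        add_zero] at hd
      exact hd.symm
    have row : diag R x * β.B (diag R x) (diag R u) = 0 := by
      have hd := β.hder_r (diag R x) (diag R x) (diag R u) memx memx memu
      rw [diag_mul_diag_ne hne, β.zero_r memx, β.hanti _ memx, zero_mul, zero_add] at hd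
      exact hd.symm
    have expand := β.hder_l (diag R x) (diag R x) (diag R u) memx memx memu
    rw [diag_mul_diag, col, row, add_zero] at expand
    exact expand

lemma eq_smul_single (w : P) {x y : P} (h : x ≤ y) :
    β.B (diag R w) (esingle R h) = (β.B (diag R w) (esingle R h) x y) • esingle R h := by
  have memw := esingle_mem (R := R) (le_refl w)
  have memx := esingle_mem (R := R) (le_refl x)
  have memy := esingle_mem (R := R) (le_refl y)
  have meme := esingle_mem (R := R) h
  have hP2 : β.B (diag R w) (esingle R h) = diag R x * β.B (diag R w) (esingle R h) := by
    have hd := β.hder_r (diag R w) (diag R x) (esingle R h) memw memx meme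
    rw [diag_mul_esingle h, β.diag_diag, zero_mul, zero_add] at hd
    exact hd
  have hP3 : β.B (diag R w) (esingle R h) = β.B (diag R w) (esingle R h) * diag R y := by
    have hd := β.hder_r (diag R w) (esingle R h) (diag R y) memw meme memy
    rw [esingle_mul_diag h, β.diag_diag, mul_zero, add_zero] at hd
    exact hd
  have e2 : ∀ a b : P, β.B (diag R w) (esingle R h) a b =
      if a = x then β.B (diag R w) (esingle R h) x b else 0 := by
    intro a b
    conv_lhs => rw [hP2]
    exact diag_mul_apply x _ a b
  have e3 : ∀ a b : P, β.B (diag R w) (esingle R h) a b =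
      if b = y then β.B (diag R w) (esingle R h) a y else 0 := by
    intro a b
    conv_lhs => rw [hP3]
    exact mul_diag_apply y _ a b
  ext a b _
  rw [constSMul_apply, esingle_apply, smul_eq_mul, e2 a b]
  by_cases hax : a = x
  · subst hax
    rw [if_pos rfl, e3 a b]
    by_cases hby : b = y
    · subst hby; simp
    · simp [hby]
  · simp [hax]

lemma not_mem_single (w : P) {x y : P} (h : x ≤ y) (hwx : w ≠ x) (hwy : w ≠ y) :
    β.B (diag R w) (esingle R h) = 0 := by
  have memw := esingle_mem (R := R) (le_refl w)
  have meme := esingle_mem (R := R) h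
  have hP1 := β.hder_l (diag R w) (diag R w) (esingle R h) memw memw meme
  rw [diag_mul_diag] at hP1
  have hv := apply_congr hP1 x y
  rw [IncidenceAlgebra.add_apply, mul_diag_apply, diag_mul_apply, if_neg (Ne.symm hwy),
    if_neg (Ne.symm hwx), add_zero] at hv
  rw [β.eq_smul_single w h, hv, zero_smul]

open Classical in
/-- The function `σ`. -/
noncomputable def sig (x y : P) : R :=
  if h : x ≤ y then β.B (diag R x) (esingle R h) x y else 0

lemma sig_spec {x y : P} (h : x ≤ y) :
    β.B (diag R x) (esingle R h) = β.sig x y • esingle R h := by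
  rw [sig, dif_pos h]
  exact β.eq_smul_single x h

lemma single_y {x y : P} (hxy : x < y) :
    β.B (diag R y) (esingle R hxy.le) = (-β.sig x y) • esingle R hxy.le := by
  have memx := esingle_mem (R := R) (le_refl x)
  have memy := esingle_mem (R := R) (le_refl y)
  have meme := esingle_mem (R := R) hxy.le
  have hc := β.eq_smul_single y hxy.le
  have hd := β.hder_r (esingle R hxy.le) (diag R x) (diag R y) meme memx memy
  rw [diag_mul_diag_ne hxy.ne, β.zero_r meme, β.skew meme memx, β.skew meme memy,
    β.sig_spec hxy.le, hc, neg_mul, smul_mul_assoc, esingle_mul_diag hxy.le, mul_neg,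
    mul_smul_comm, diag_mul_esingle hxy.le] at hd
  -- hd : 0 = -(sig • e) + -(c • e)
  have hv := apply_congr hd x y
  rw [IncidenceAlgebra.zero_apply, IncidenceAlgebra.add_apply, IncidenceAlgebra.neg_apply,
    IncidenceAlgebra.neg_apply, constSMul_apply, constSMul_apply, esingle_self_apply,
    smul_eq_mul, smul_eq_mul, mul_one, mul_one] at hv
  have hcv : β.B (diag R y) (esingle R hxy.le) x y = -β.sig x y := by linear_combination hv
  rw [hc, hcv]

lemma diag_single (w : P) {x y : P} (h : x ≤ y) :
    β.B (diag R w) (esingle R h) =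
      ((if w = x then β.sig x y else 0) + (if w = y then -β.sig x y else 0)) • esingle R h := by
  rcases eq_or_lt_of_le h with rfl | hlt
  · rw [show esingle R h = diag R x from rfl, β.diag_diag]
    split_ifs <;> simp
  · rcases eq_or_ne w x with rfl | hwx
    · rw [if_pos rfl, if_neg hlt.ne, add_zero]
      exact β.sig_spec h
    · rcases eq_or_ne w y with rfl | hwy
      · rw [if_neg hwx, if_pos rfl, zero_add]
        exact β.single_y hlt
      · rw [if_neg hwx, if_neg hwy, add_zero, zero_smul]
        exact β.not_mem_single w h hwx hwy

lemma sig_left {x y v : P} (hxy : x < y) (hyv : y < v) : β.sig x v = β.sig x y := by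
  have memx := esingle_mem (R := R) (le_refl x)
  have mem1 := esingle_mem (R := R) hxy.le
  have mem2 := esingle_mem (R := R) hyv.le
  have hxv : x < v := hxy.trans hyv
  have key := β.hder_r (diag R x) (esingle R hxy.le) (esingle R hyv.le) memx mem1 mem2
  rw [esingle_mul_esingle hxy.le hyv.le, β.sig_spec (hxy.le.trans hyv.le), β.sig_spec hxy.le,
    β.not_mem_single x hyv.le hxy.ne hxv.ne, mul_zero, add_zero, smul_mul_assoc,
    esingle_mul_esingle hxy.le hyv.le] at key
  have hv := apply_congr key x v
  rw [constSMul_apply, constSMul_apply, esingle_self_apply, smul_eq_mul, smul_eq_mul,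
    mul_one, mul_one] at hv
  exact hv

lemma sig_right {x y v : P} (hxy : x < y) (hyv : y < v) : β.sig x v = β.sig y v := by
  have memv := esingle_mem (R := R) (le_refl v)
  have mem1 := esingle_mem (R := R) hxy.le
  have mem2 := esingle_mem (R := R) hyv.le
  have hxv : x < v := hxy.trans hyv
  have key := β.hder_r (diag R v) (esingle R hxy.le) (esingle R hyv.le) memv mem1 mem2
  rw [esingle_mul_esingle hxy.le hyv.le, show (hxy.le.trans hyv.le) = hxv.le from rfl,
    β.single_y hxv, β.single_y hyv, β.not_mem_single v hxy.le (Ne.symm hxv.ne)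
      (Ne.symm hyv.ne), zero_mul, zero_add, mul_smul_comm,
    esingle_mul_esingle hxy.le hyv.le] at key
  have hv := apply_congr key x v
  rw [constSMul_apply, constSMul_apply, esingle_self_apply, smul_eq_mul, smul_eq_mul,
    mul_one, mul_one] at hv
  exact neg_injective hv

lemma sig_trans1 {x y v : P} (hxy : x < y) (hyv : y ≤ v) : β.sig x y = β.sig x v := by
  rcases eq_or_lt_of_le hyv with rfl | h
  · rfl
  · exact (β.sig_left hxy h).symm

lemma sig_trans2 {x u v : P} (hxu : x ≤ u) (huv : u < v) : β.sig x v = β.sig u v := by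
  rcases eq_or_lt_of_le hxu with rfl | h
  · rfl
  · exact β.sig_right h huv

lemma sig_half {x y u v : P} (hxy : x < y) (huv : u < v) (hxu : x ≤ u)
    (hyv : y ≤ v ∨ v ≤ y) : β.sig x y = β.sig u v := by
  rcases hyv with h | h
  · exact (β.sig_trans1 hxy h).trans (β.sig_trans2 hxu huv)
  · exact (β.sig_trans2 hxu (huv.trans_le h)).trans (β.sig_trans1 huv h).symm

lemma sig_chain {x y u v : P} (hxy : x < y) (huv : u < v)
    (hc : IsChain (· ≤ ·) ({x, y, u, v} : Set P)) : β.sig x y = β.sig u v := by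
  have tot : ∀ a b : P, a ∈ ({x, y, u, v} : Set P) → b ∈ ({x, y, u, v} : Set P) →
      a ≤ b ∨ b ≤ a := by
    intro a b ha hb
    rcases eq_or_ne a b with rfl | hne
    · exact Or.inl le_rfl
    · exact hc ha hb hne
  have hx : x ∈ ({x, y, u, v} : Set P) := by simp
  have hy : y ∈ ({x, y, u, v} : Set P) := by simp
  have hu : u ∈ ({x, y, u, v} : Set P) := by simp
  have hv : v ∈ ({x, y, u, v} : Set P) := by simp
  rcases tot x u hx hu with h | h
  · exact β.sig_half hxy huv h (tot y v hy hv)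
  · exact (β.sig_half huv hxy h ((tot y v hy hv).symm)).symm


lemma diag_pair (w : P) {u v : P} (huv : u ≤ v) :
    (∀ a, β.B (diag R w) (esingle R huv) a a = 0) ∧
    (∀ a b, a < b → β.B (diag R w) (esingle R huv) a b =
      β.sig a b * ((diag R w * esingle R huv - esingle R huv * diag R w) a b)) := by
  have hB := β.diag_single w huv
  constructor
  · intro a
    have hv := apply_congr hB a a
    rw [constSMul_apply, esingle_apply, smul_eq_mul] at hv
    rw [hv]
    clear hv hB
    by_cases h : a = u ∧ a = v
    · obtain ⟨rfl, rfl⟩ := h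
      split_ifs <;> first | ring1 | (exfalso; simp_all) | (exfalso; grind)
    · rw [if_neg h, mul_zero]
  · intro a b hab
    have hne : a ≠ b := hab.ne
    have hv := apply_congr hB a b
    rw [constSMul_apply, esingle_apply, smul_eq_mul] at hv
    rw [hv, IncidenceAlgebra.sub_apply, diag_mul_apply, mul_diag_apply]
    clear hv hB
    simp only [esingle_apply]
    by_cases hau : a = u
    · by_cases hbv : b = v
      · subst hau; subst hbv
        split_ifs <;> first | ring1 | (exfalso; grind) | (exfalso; simp_all)
      · split_ifs <;> first | ring1 | (exfalso; simp_all) | (exfalso; grind)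
    · split_ifs <;> first | ring1 | (exfalso; simp_all) | (exfalso; grind)


set_option maxHeartbeats 1000000 in
lemma strict_pair {x y u v : P} (hxy : x < y) (huv : u < v) :
    (∀ a, β.B (esingle R hxy.le) (esingle R huv.le) a a = 0) ∧
    (∀ a b, a < b → β.B (esingle R hxy.le) (esingle R huv.le) a b =
      β.sig a b * ((esingle R hxy.le * esingle R huv.le
        - esingle R huv.le * esingle R hxy.le) a b)) := by
  by_cases hfg : x = u ∧ y = v
  · obtain ⟨rfl, rfl⟩ := hfg
    have he : esingle R huv.le = esingle R hxy.le := rfl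
    rw [he, β.hanti _ (esingle_mem hxy.le)]
    constructor
    · intro a; rw [IncidenceAlgebra.zero_apply]
    · intro a b hab
      rw [IncidenceAlgebra.zero_apply, sub_self, IncidenceAlgebra.zero_apply, mul_zero]
  · have memf := esingle_mem (R := R) hxy.le
    have memg := esingle_mem (R := R) huv.le
    have memdx := esingle_mem (R := R) (le_refl x)
    have memdy := esingle_mem (R := R) (le_refl y)
    have memdu := esingle_mem (R := R) (le_refl u)
    have memdv := esingle_mem (R := R) (le_refl v)
    have hBx := β.diag_single x huv.le
    have hBy := β.diag_single y huv.le
    have hBu : β.B (esingle R hxy.le) (diag R u) =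
        (-((if u = x then β.sig x y else 0) + (if u = y then -β.sig x y else 0))) •
          esingle R hxy.le := by
      rw [β.skew memf memdu, β.diag_single u hxy.le, neg_smul]
    have hBv : β.B (esingle R hxy.le) (diag R v) =
        (-((if v = x then β.sig x y else 0) + (if v = y then -β.sig x y else 0))) •
          esingle R hxy.le := by
      rw [β.skew memf memdv, β.diag_single v hxy.le, neg_smul]
    have hd1 := β.hder_l (diag R x) (esingle R hxy.le) (esingle R huv.le) memdx memf memg
    rw [diag_mul_esingle hxy.le] at hd1
    have F1 : ∀ a b : P, a ≠ x → β.B (esingle R hxy.le) (esingle R huv.le) a b =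
        ((if x = u then β.sig u v else 0) + (if x = v then -β.sig u v else 0)) *
          (esingle R huv.le * esingle R hxy.le) a b := by
      intro a b hax
      have hv := apply_congr hd1 a b
      rw [IncidenceAlgebra.add_apply, diag_mul_apply, if_neg hax, add_zero, hBx,
        smul_mul_assoc, constSMul_apply, smul_eq_mul] at hv
      exact hv
    have hd2 := β.hder_l (esingle R hxy.le) (diag R y) (esingle R huv.le) memf memdy memg
    rw [esingle_mul_diag hxy.le] at hd2
    have F2 : ∀ a b : P, b ≠ y → β.B (esingle R hxy.le) (esingle R huv.le) a b =
        ((if y = u then β.sig u v else 0) + (if y = v then -β.sig u v else 0)) *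
          (esingle R hxy.le * esingle R huv.le) a b := by
      intro a b hby
      have hv := apply_congr hd2 a b
      rw [IncidenceAlgebra.add_apply, mul_diag_apply, if_neg hby, zero_add, hBy,
        mul_smul_comm, constSMul_apply, smul_eq_mul] at hv
      exact hv
    have hd3 := β.hder_r (esingle R hxy.le) (diag R u) (esingle R huv.le) memf memdu memg
    rw [diag_mul_esingle huv.le] at hd3
    have F3 : ∀ a b : P, a ≠ u → β.B (esingle R hxy.le) (esingle R huv.le) a b =
        (-((if u = x then β.sig x y else 0) + (if u = y then -β.sig x y else 0))) *
          (esingle R hxy.le * esingle R huv.le) a b := by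
      intro a b hau
      have hv := apply_congr hd3 a b
      rw [IncidenceAlgebra.add_apply, diag_mul_apply, if_neg hau, add_zero, hBu,
        smul_mul_assoc, constSMul_apply, smul_eq_mul] at hv
      exact hv
    have hd4 := β.hder_r (esingle R hxy.le) (esingle R huv.le) (diag R v) memf memg memdv
    rw [esingle_mul_diag huv.le] at hd4
    have F4 : ∀ a b : P, b ≠ v → β.B (esingle R hxy.le) (esingle R huv.le) a b =
        (-((if v = x then β.sig x y else 0) + (if v = y then -β.sig x y else 0))) *
          (esingle R huv.le * esingle R hxy.le) a b := by
      intro a b hbv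
      have hv := apply_congr hd4 a b
      rw [IncidenceAlgebra.add_apply, mul_diag_apply, if_neg hbv, zero_add, hBv,
        mul_smul_comm, constSMul_apply, smul_eq_mul] at hv
      exact hv
    have pfg : ∀ a b : P, (esingle R hxy.le * esingle R huv.le) a b
        = if b = v then (if a = x ∧ u = y then 1 else 0) else 0 := by
      intro a b; rw [mul_esingle_apply huv.le, esingle_apply]
    have pgf : ∀ a b : P, (esingle R huv.le * esingle R hxy.le) a b
        = if b = y then (if a = u ∧ x = v then 1 else 0) else 0 := by
      intro a b; rw [mul_esingle_apply hxy.le, esingle_apply]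
    clear hd1 hd2 hd3 hd4 hBx hBy hBu hBv
    constructor
    · intro a
      by_cases hax : a = x
      · have hay : a ≠ y := by rw [hax]; exact hxy.ne
        rw [F2 a a hay, pfg a a]
        by_cases hav : a = v
        · have hnot : ¬(a = x ∧ u = y) := by
            rintro ⟨-, h2⟩
            have hvx : v = x := hav ▸ hax
            exact lt_irrefl u (((huv.trans_le hvx.le).trans hxy).trans_le h2.symm.le)
          rw [if_pos hav, if_neg hnot, mul_zero]
        · rw [if_neg hav, mul_zero]
      · rw [F1 a a hax, pgf a a]
        by_cases hay : a = y
        · have hnot : ¬(a = u ∧ x = v) := by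
            rintro ⟨h1, h2⟩
            have hyu : y = u := hay ▸ h1
            exact lt_irrefl x (((hxy.trans_le hyu.le).trans huv).trans_le h2.symm.le)
          rw [if_pos hay, if_neg hnot, mul_zero]
        · rw [if_neg hay, mul_zero]
    · intro a b hab
      rw [IncidenceAlgebra.sub_apply]
      by_cases hax : a = x <;> by_cases hau : a = u
      · -- a = x and a = u, hence x = u and y ≠ v
        have hxu : x = u := hax ▸ hau
        have hyv : y ≠ v := fun h => hfg ⟨hxu, h⟩
        by_cases hby : b = y
        · have hbv : b ≠ v := fun h => hyv (hby ▸ h : y = v)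
          rw [F4 a b hbv, pgf a b, pfg a b, if_pos hby, if_neg hbv]
          have hnot : ¬(a = u ∧ x = v) := by
            rintro ⟨-, h2⟩
            exact huv.ne (hxu.symm.trans h2)
          rw [if_neg hnot]; ring1
        · rw [F2 a b hby, pfg a b, pgf a b, if_neg hby]
          have hnot : ¬(a = x ∧ u = y) := by
            rintro ⟨-, h2⟩
            exact hxy.ne (hxu.trans h2)
          rw [if_neg hnot, ite_self]; ring1
      · -- a = x, a ≠ u
        by_cases hbv : b = v
        · rw [F3 a b hau, pfg a b, pgf a b, if_pos hbv]
          have hux : u ≠ x := fun h => hau (hax.trans h.symm)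
          rw [if_neg hux]
          have hnot2 : ¬(a = u ∧ x = v) := fun hc => hau hc.1
          rw [if_neg hnot2, ite_self]
          by_cases huy : u = y
          · have hcond : a = x ∧ u = y := ⟨hax, huy⟩
            rw [if_pos hcond, if_pos huy]
            have hsig : β.sig x y = β.sig a b := by
              rw [hax, hbv]
              exact β.sig_trans1 hxy (huy ▸ huv.le)
            rw [← hsig]; ring1
          · have hcond : ¬(a = x ∧ u = y) := fun hc => huy hc.2
            rw [if_neg hcond, if_neg huy]; ring1
        · rw [F4 a b hbv, pgf a b, pfg a b]
          have hnot : ¬(a = u ∧ x = v) := fun hc => hau hc.1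
          rw [if_neg hnot, ite_self, if_neg hbv]; ring1
      · -- a ≠ x, a = u
        by_cases hby : b = y
        · rw [F1 a b hax, pgf a b, pfg a b, if_pos hby]
          have hxu : x ≠ u := fun h => hax (hau.trans h.symm)
          rw [if_neg hxu]
          have hnot2 : ¬(a = x ∧ u = y) := fun hc => hax hc.1
          rw [if_neg hnot2, ite_self]
          by_cases hxv : x = v
          · have hcond : a = u ∧ x = v := ⟨hau, hxv⟩
            rw [if_pos hcond, if_pos hxv]
            have hsig : β.sig u v = β.sig a b := by
              rw [hau, hby]
              exact β.sig_trans1 huv (hxv ▸ hxy.le)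
            rw [← hsig]; ring1
          · have hcond : ¬(a = u ∧ x = v) := fun hc => hxv hc.2
            rw [if_neg hcond, if_neg hxv]; ring1
        · rw [F2 a b hby, pfg a b, pgf a b, if_neg hby]
          have hnot : ¬(a = x ∧ u = y) := fun hc => hax hc.1
          rw [if_neg hnot, ite_self]; ring1
      · -- a ≠ x, a ≠ u
        rw [F1 a b hax, pgf a b, pfg a b]
        have hnot1 : ¬(a = u ∧ x = v) := fun hc => hau hc.1
        have hnot2 : ¬(a = x ∧ u = y) := fun hc => hax hc.1
        rw [if_neg hnot1, if_neg hnot2, ite_self, ite_self]; ring1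


lemma single_single {x y u v : P} (hxy : x ≤ y) (huv : u ≤ v) :
    (∀ a, β.B (esingle R hxy) (esingle R huv) a a = 0) ∧
    (∀ a b, a < b → β.B (esingle R hxy) (esingle R huv) a b =
      β.sig a b * ((esingle R hxy * esingle R huv - esingle R huv * esingle R hxy) a b)) := by
  rcases eq_or_lt_of_le hxy with rfl | hxy'
  · exact β.diag_pair x huv
  · rcases eq_or_lt_of_le huv with rfl | huv'
    · have hskew := β.skew (esingle_mem (R := R) hxy) (esingle_mem (R := R) huv)
      obtain ⟨hD, hS⟩ := β.diag_pair u hxy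
      constructor
      · intro a
        rw [hskew, IncidenceAlgebra.neg_apply,
          show β.B (esingle R huv) (esingle R hxy) a a = 0 from hD a, neg_zero]
      · intro a b hab
        rw [hskew, IncidenceAlgebra.neg_apply,
          show β.B (esingle R huv) (esingle R hxy) a b = β.sig a b *
            ((esingle R huv * esingle R hxy - esingle R hxy * esingle R huv) a b)
            from hS a b hab,
          IncidenceAlgebra.sub_apply, IncidenceAlgebra.sub_apply]
        ring
    · exact β.strict_pair hxy' huv'

/-- The main statement, for all elements of `D`. -/
lemma main : ∀ f g : IncidenceAlgebra R P, f ∈ Dspan R P → g ∈ Dspan R P →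
    (∀ a, β.B f g a a = 0) ∧
    (∀ a b : P, a < b → β.B f g a b = β.sig a b * ((f * g - g * f) a b)) := by
  intro f g hf hg
  have hf' : f ∈ Submodule.span R
      {f : IncidenceAlgebra R P | ∃ (x y : P) (h : x ≤ y), f = esingle R h} := hf
  have hg' : g ∈ Submodule.span R
      {f : IncidenceAlgebra R P | ∃ (x y : P) (h : x ≤ y), f = esingle R h} := hg
  clear hf hg
  induction hf' using Submodule.span_induction with
  | mem f' hf' =>
    obtain ⟨x, y, hxyle, rfl⟩ := hf'
    induction hg' using Submodule.span_induction with
    | mem g' hg' =>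
      obtain ⟨u, v, huvle, rfl⟩ := hg'
      exact β.single_single hxyle huvle
    | zero =>
      rw [β.zero_r (esingle_mem hxyle)]
      constructor
      · intro a; rw [IncidenceAlgebra.zero_apply]
      · intro a b hab
        rw [IncidenceAlgebra.zero_apply, mul_zero, zero_mul, sub_zero,
          IncidenceAlgebra.zero_apply, mul_zero]
    | add g1 g2 hg1 hg2 ih1 ih2 =>
      have hadd := β.hadd_r (esingle R hxyle) g1 g2 (esingle_mem hxyle) hg1 hg2
      constructor
      · intro a
        rw [hadd, IncidenceAlgebra.add_apply, (ih1).1 a, (ih2).1 a, add_zero]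
      · intro a b hab
        have hdist : esingle R hxyle * (g1 + g2) - (g1 + g2) * esingle R hxyle =
            (esingle R hxyle * g1 - g1 * esingle R hxyle) +
            (esingle R hxyle * g2 - g2 * esingle R hxyle) := by
          rw [mul_add, add_mul]; abel
        rw [hadd, IncidenceAlgebra.add_apply, (ih1).2 a b hab, (ih2).2 a b hab, hdist,
          IncidenceAlgebra.add_apply]
        ring
    | smul r g' hg' ih =>
      have hsm := β.hsmul_r r (esingle R hxyle) g' (esingle_mem hxyle) hg'
      constructor
      · intro a
        rw [hsm, constSMul_apply, (ih).1 a, smul_zero]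
      · intro a b hab
        have hdist : esingle R hxyle * (r • g') - (r • g') * esingle R hxyle =
            r • (esingle R hxyle * g' - g' * esingle R hxyle) := by
          rw [mul_smul_comm, smul_mul_assoc, smul_sub]
        rw [hsm, constSMul_apply, (ih).2 a b hab, hdist, constSMul_apply, smul_eq_mul,
          smul_eq_mul]
        ring
  | zero =>
    rw [β.zero_l hg']
    constructor
    · intro a; rw [IncidenceAlgebra.zero_apply]
    · intro a b hab
      rw [IncidenceAlgebra.zero_apply, zero_mul, mul_zero, zero_sub,
        IncidenceAlgebra.neg_apply, IncidenceAlgebra.zero_apply, neg_zero, mul_zero]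
  | add f1 f2 hf1 hf2 ih1 ih2 =>
    have hadd := β.hadd_l f1 f2 g hf1 hf2 hg'
    constructor
    · intro a
      rw [hadd, IncidenceAlgebra.add_apply, (ih1).1 a, (ih2).1 a, add_zero]
    · intro a b hab
      have hdist : (f1 + f2) * g - g * (f1 + f2) =
          (f1 * g - g * f1) + (f2 * g - g * f2) := by
        rw [mul_add, add_mul]; abel
      rw [hadd, IncidenceAlgebra.add_apply, (ih1).2 a b hab, (ih2).2 a b hab, hdist,
        IncidenceAlgebra.add_apply]
      ring
  | smul r f' hf' ih =>
    have hsm := β.hsmul_l r f' g hf' hg'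
    constructor
    · intro a
      rw [hsm, constSMul_apply, (ih).1 a, smul_zero]
    · intro a b hab
      have hdist : (r • f') * g - g * (r • f') = r • (f' * g - g * f') := by
        rw [mul_smul_comm, smul_mul_assoc, smul_sub]
      rw [hsm, constSMul_apply, (ih).2 a b hab, hdist, constSMul_apply, smul_eq_mul,
        smul_eq_mul]
      ring

end Bider

end StTen

/-- Every `R`-bilinear antisymmetric biderivation `B` of `D` with values in
`I(P,R)` is given by a map `σ : P²_< → R` constant on chains via
`B(f,g)(x,x) = 0` and `B(f,g)(x,y) = σ(x,y)[f,g](x,y)` for `x < y`. -/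
theorem bider_of_D_eq_sigma_commutator
    {R P : Type*} [CommRing R] [PartialOrder P] [LocallyFiniteOrder P] [DecidableEq P]
    (B : IncidenceAlgebra R P → IncidenceAlgebra R P → IncidenceAlgebra R P)
    (hadd_l : ∀ f g h, f ∈ Dspan R P → g ∈ Dspan R P → h ∈ Dspan R P →
      B (f + g) h = B f h + B g h)
    (hadd_r : ∀ f g h, f ∈ Dspan R P → g ∈ Dspan R P → h ∈ Dspan R P →
      B f (g + h) = B f g + B f h)
    (hsmul_l : ∀ (r : R) (f h), f ∈ Dspan R P → h ∈ Dspan R P → B (r • f) h = r • B f h)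
    (hsmul_r : ∀ (r : R) (f h), f ∈ Dspan R P → h ∈ Dspan R P → B f (r • h) = r • B f h)
    (hder_l : ∀ f g h, f ∈ Dspan R P → g ∈ Dspan R P → h ∈ Dspan R P →
      B (f * g) h = B f h * g + f * B g h)
    (hder_r : ∀ f g h, f ∈ Dspan R P → g ∈ Dspan R P → h ∈ Dspan R P →
      B f (g * h) = B f g * h + g * B f h)
    (hanti : ∀ f, f ∈ Dspan R P → B f f = 0)
    :
    ∃ σ : P → P → R,
      (∀ x y u v : P, x < y → u < v → IsChain (· ≤ ·) ({x, y, u, v} : Set P) →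
        σ x y = σ u v) ∧
      ∀ f g, f ∈ Dspan R P → g ∈ Dspan R P →
        (∀ x : P, B f g x x = 0) ∧
        (∀ x y : P, x < y → B f g x y = σ x y * (f * g - g * f) x y) := by
  let β : StTen.Bider R P :=
    ⟨B, hadd_l, hadd_r, hsmul_l, hsmul_r, hder_l, hder_r, hanti⟩
  refine ⟨β.sig, fun x y u v hxy huv hc => β.sig_chain hxy huv hc, ?_⟩
  intro f g hf hg
  exact β.main f g hf hg
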